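/- For every tree T = (C, E) of pathwidth w, there exists a path decomposition S_1, ..., S_r of T of width w such that for every edge e ∈ E, at least one endpoint a of e appears in some bag S_i with |S_i| ≤ w. -/

import Mathlib

/-- `L` is a path decomposition of `G`: every edge is contained in some bag, and for
every vertex the set of bags containing it forms an interval of the sequence. -/
def IsPathDecomp {C : Type*} (G : SimpleGraph C) (L : List (Finset C)) : Prop :=
  (∀ x y : C, G.Adj x y → ∃ S ∈ L, x ∈ S ∧ y ∈ S) ∧
  (∀ (x : C) (i j k : Fin L.length), i ≤ j → j ≤ k →
      x ∈ L.get i → x ∈ L.get k → x ∈ L.get j)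

open Classical in
/-- One step of removal of bags comparable to their neighbor. -/
noncomputable def stepR {C : Type*} (S : Finset C) : List (Finset C) → List (Finset C)
  | [] => [S]
  | T :: rest => if S ⊆ T then T :: rest else if T ⊆ S then stepR S rest
      else S :: T :: rest

/-- Remove bags contained in a neighbor. -/
noncomputable def reduceR {C : Type*} (L : List (Finset C)) : List (Finset C) :=
  L.foldr stepR []

open Classical in
/-- The separator bag to be inserted after bag `k`. -/
noncomputable def mbag {C : Type*} (R : List (Finset C)) (k : ℕ) : Finset C :=
  if h : (R.getD k ∅ \ R.getD (k+1) ∅).Nonempty then (R.getD k ∅).erase h.choose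
  else R.getD k ∅ ∩ R.getD (k+1) ∅

open Classical in
/-- Interleave the bags with separator bags. -/
noncomputable def ilv {C : Type*} (R : List (Finset C)) : List (Finset C) :=
  List.ofFn (n := 2 * R.length) fun i =>
    if (i : ℕ) % 2 = 0 then R.getD ((i : ℕ)/2) ∅ else mbag R ((i : ℕ)/2)

section lemmas
variable {C : Type*}
open Classical

theorem stepR_sublist (S : Finset C) (L : List (Finset C)) : List.Sublist (stepR S L) (S :: L) := by
  induction L with
  | nil => simp [stepR]
  | cons T rest ih =>
    rw [stepR]
    split_ifs with h1 h2
    · exact (List.sublist_cons_self _ _)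
    · exact ih.trans ((List.cons_sublist_cons.mpr (List.sublist_cons_self T rest)))
    · exact List.Sublist.refl _

theorem reduceR_sublist (L : List (Finset C)) : List.Sublist (reduceR L) L := by
  induction L with
  | nil => simp [reduceR]
  | cons S rest ih =>
    have : reduceR (S :: rest) = stepR S (reduceR rest) := rfl
    rw [this]
    exact (stepR_sublist S (reduceR rest)).trans (List.cons_sublist_cons.mpr ih)

theorem stepR_subset (S : Finset C) (L : List (Finset C)) :
    ∀ U ∈ S :: L, ∃ V ∈ stepR S L, U ⊆ V := by
  induction L with
  | nil =>
    intro U hU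
    simp only [List.mem_singleton] at hU
    subst hU
    exact ⟨U, by simp [stepR], Finset.Subset.refl _⟩
  | cons T rest ih =>
    intro U hU
    rw [stepR]
    rcases List.mem_cons.mp hU with h | h
    · -- U = S
      subst h
      split_ifs with h1 h2
      · exact ⟨T, by simp, h1⟩
      · obtain ⟨V, hV, hUV⟩ := ih U (by simp)
        exact ⟨V, hV, hUV⟩
      · exact ⟨U, by simp, Finset.Subset.refl _⟩
    · rcases List.mem_cons.mp h with h' | h'
      · -- U = T
        subst h'
        split_ifs with h1 h2
        · exact ⟨U, by simp, Finset.Subset.refl _⟩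
        · obtain ⟨V, hV, hUV⟩ := ih S (by simp)
          exact ⟨V, hV, h2.trans hUV⟩
        · exact ⟨U, by simp, Finset.Subset.refl _⟩
      · -- U ∈ rest
        split_ifs with h1 h2
        · exact ⟨U, by simp [h'], Finset.Subset.refl _⟩
        · obtain ⟨V, hV, hUV⟩ := ih U (by simp [h'])
          exact ⟨V, hV, hUV⟩
        · exact ⟨U, by simp [h'], Finset.Subset.refl _⟩

theorem reduceR_subset (L : List (Finset C)) :
    ∀ U ∈ L, ∃ V ∈ reduceR L, U ⊆ V := by
  induction L with
  | nil => simp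
  | cons S rest ih =>
    intro U hU
    have hred : reduceR (S :: rest) = stepR S (reduceR rest) := rfl
    rcases List.mem_cons.mp hU with h | h
    · obtain ⟨V, hV, hUV⟩ := stepR_subset S (reduceR rest) S (by simp)
      exact ⟨V, hred ▸ hV, h ▸ hUV⟩
    · obtain ⟨V, hV, hUV⟩ := ih U h
      obtain ⟨W, hW, hVW⟩ := stepR_subset S (reduceR rest) V (by simp [hV])
      exact ⟨W, hred ▸ hW, hUV.trans hVW⟩

/-- incomparability -/
def Incomp (A B : Finset C) : Prop := ¬A ⊆ B ∧ ¬B ⊆ A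

theorem stepR_chain (S : Finset C) (L : List (Finset C))
    (h : L.Chain' Incomp) : (stepR S L).Chain' Incomp := by
  induction L with
  | nil => simp [stepR]; exact List.isChain_singleton S
  | cons T rest ih =>
    rw [stepR]
    split_ifs with h1 h2
    · exact h
    · exact ih h.tail
    · exact List.IsChain.cons h (by
        intro y hy
        rw [List.head?_cons, Option.mem_def, Option.some_inj] at hy
        exact hy ▸ ⟨h1, h2⟩)

theorem reduceR_chain (L : List (Finset C)) : (reduceR L).Chain' Incomp := by
  induction L with
  | nil => simp [reduceR]; exact List.isChain_nil
  | cons S rest ih => exact stepR_chain S (reduceR rest) ih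

theorem mbag_subset (R : List (Finset C)) (k : ℕ) : mbag R k ⊆ R.getD k ∅ := by
  rw [mbag]
  split_ifs with h
  · exact Finset.erase_subset _ _
  · exact Finset.inter_subset_left

theorem inter_subset_mbag (R : List (Finset C)) (k : ℕ) :
    R.getD k ∅ ∩ R.getD (k+1) ∅ ⊆ mbag R k := by
  rw [mbag]
  split_ifs with h
  · intro x hx
    rw [Finset.mem_inter] at hx
    refine Finset.mem_erase.mpr ⟨?_, hx.1⟩
    intro hxe
    have := h.choose_spec
    rw [← hxe, Finset.mem_sdiff] at this
    exact this.2 hx.2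
  · exact Finset.Subset.refl _

theorem mbag_card (R : List (Finset C)) (k : ℕ) (hchain : R.Chain' Incomp) (w : ℕ)
    (hcard : ∀ S ∈ R, S.card ≤ w + 1) : (mbag R k).card ≤ w := by
  rw [mbag]
  split_ifs with h
  · have hk : k < R.length := by
      by_contra hk
      rw [List.getD_eq_default _ _ (le_of_not_gt hk)] at h
      simp at h
    have hS : R.getD k ∅ ∈ R := by
      rw [List.getD_eq_getElem _ _ hk]; exact List.getElem_mem hk
    have h1 : (R.getD k ∅).card ≤ w + 1 := hcard _ hS
    have hmem : h.choose ∈ R.getD k ∅ := (Finset.mem_sdiff.mp h.choose_spec).1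
    have := Finset.card_erase_of_mem hmem
    omega
  · -- S ⊆ T case: impossible unless degenerate
    rw [Finset.not_nonempty_iff_eq_empty, Finset.sdiff_eq_empty_iff_subset] at h
    by_cases hk1 : k + 1 < R.length
    · exfalso
      have hk : k < R.length := by omega
      have := List.isChain_iff_getElem.mp hchain k (by omega)
      rw [List.getD_eq_getElem _ _ hk, List.getD_eq_getElem _ _ hk1] at h
      exact this.1 h
    · rw [List.getD_eq_default _ _ (le_of_not_gt hk1)] at h
      have : R.getD k ∅ = ∅ := Finset.subset_empty.mp h
      rw [this]
      simp

theorem ilv_length (R : List (Finset C)) : (ilv R).length = 2 * R.length := by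
  simp [ilv]

theorem ilv_get (R : List (Finset C)) (i : Fin (ilv R).length) :
    (ilv R).get i = if (i : ℕ) % 2 = 0 then R.getD ((i : ℕ)/2) ∅ else mbag R ((i : ℕ)/2) := by
  simp only [ilv, List.get_eq_getElem, List.getElem_ofFn]
  exact List.get_ofFn _ i

theorem ilv_get_subset (R : List (Finset C)) (i : Fin (ilv R).length) :
    (ilv R).get i ⊆ R.getD ((i : ℕ)/2) ∅ := by
  rw [ilv_get]
  split_ifs with h
  · exact Finset.Subset.refl _
  · exact mbag_subset R _

theorem mem_ilv_of_mem (R : List (Finset C)) (S : Finset C) (hS : S ∈ R) : S ∈ ilv R := by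
  obtain ⟨k, hk, hget⟩ := List.mem_iff_getElem.mp hS
  rw [List.mem_iff_getElem]
  refine ⟨2 * k, by rw [ilv_length]; omega, ?_⟩
  have h2k : 2 * k < (ilv R).length := by rw [ilv_length]; omega
  have := ilv_get R ⟨2 * k, h2k⟩
  simp only [List.get_eq_getElem] at this
  rw [this]
  have : (2 * k) % 2 = 0 := by omega
  rw [if_pos this]
  have : (2 * k) / 2 = k := by omega
  rw [this, List.getD_eq_getElem _ _ hk, hget]

theorem mbag_mem_ilv (R : List (Finset C)) (k : ℕ) (hk : k < R.length) :
    mbag R k ∈ ilv R := by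
  rw [List.mem_iff_getElem]
  refine ⟨2 * k + 1, by rw [ilv_length]; omega, ?_⟩
  have h2k : 2 * k + 1 < (ilv R).length := by rw [ilv_length]; omega
  have := ilv_get R ⟨2 * k + 1, h2k⟩
  simp only [List.get_eq_getElem] at this
  rw [this]
  have h1 : (2 * k + 1) % 2 ≠ 0 := by omega
  rw [if_neg h1]
  congr 1
  omega

end lemmas

/-- Every tree of pathwidth `w` has a width-`w` path decomposition in which each edge has
an endpoint lying in a bag of size at most `w`. -/
theorem stmt13 {C : Type*} [Fintype C] (T : SimpleGraph C) (hT : T.IsTree) (w : ℕ)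
    (hex : ∃ L, IsPathDecomp T L ∧ ∀ S ∈ L, S.card ≤ w + 1)
    (hmin : ∀ L, IsPathDecomp T L → ∃ S ∈ L, w + 1 ≤ S.card) :
    ∃ L, IsPathDecomp T L ∧ (∀ S ∈ L, S.card ≤ w + 1) ∧
      ∀ x y : C, T.Adj x y →
        ∃ a, (a = x ∨ a = y) ∧ ∃ S ∈ L, a ∈ S ∧ S.card ≤ w := by
  classical
  obtain ⟨L, ⟨hcov, hitv⟩, hcard⟩ := hex
  set R := reduceR L with hR
  have hsub : List.Sublist R L := reduceR_sublist L
  have hchain : R.Chain' Incomp := reduceR_chain L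
  have hcardR : ∀ S ∈ R, S.card ≤ w + 1 := fun S hS => hcard S (hsub.mem hS)
  -- interval property for R, stated with getD
  have hitvR : ∀ (x : C) (i j k : ℕ), i ≤ j → j ≤ k → (hk : k < R.length) →
      x ∈ R.getD i ∅ → x ∈ R.getD k ∅ → x ∈ R.getD j ∅ := by
    obtain ⟨f, hf⟩ := List.sublist_iff_exists_fin_orderEmbedding_get_eq.mp hsub
    intro x i j k hij hjk hk hxi hxk
    have hi : i < R.length := by omega
    have hj : j < R.length := by omega
    rw [List.getD_eq_getElem _ _ hi] at hxi
    rw [List.getD_eq_getElem _ _ hk] at hxk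
    rw [List.getD_eq_getElem _ _ hj]
    have h1 : f ⟨i, hi⟩ ≤ f ⟨j, hj⟩ := f.monotone (by exact_mod_cast hij)
    have h2 : f ⟨j, hj⟩ ≤ f ⟨k, hk⟩ := f.monotone (by exact_mod_cast hjk)
    have := hitv x (f ⟨i, hi⟩) (f ⟨j, hj⟩) (f ⟨k, hk⟩) h1 h2
      (by rw [← hf ⟨i, hi⟩]; exact hxi) (by rw [← hf ⟨k, hk⟩]; exact hxk)
    rw [← hf ⟨j, hj⟩] at this
    exact this
  refine ⟨ilv R, ⟨?_, ?_⟩, ?_, ?_⟩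
  · -- edge coverage
    intro x y hxy
    obtain ⟨S, hS, hx, hy⟩ := hcov x y hxy
    obtain ⟨V, hV, hSV⟩ := reduceR_subset L S hS
    exact ⟨V, mem_ilv_of_mem R V hV, hSV hx, hSV hy⟩
  · -- interval property for ilv R
    intro x i j k hij hjk hxi hxk
    have hlen : (ilv R).length = 2 * R.length := ilv_length R
    have hi2 : (i : ℕ) / 2 < R.length := by have := i.isLt; omega
    have hj2 : (j : ℕ) / 2 < R.length := by have := j.isLt; omega
    have hk2 : (k : ℕ) / 2 < R.length := by have := k.isLt; omega
    have hxi' : x ∈ R.getD ((i : ℕ)/2) ∅ := ilv_get_subset R i hxi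
    have hxk' : x ∈ R.getD ((k : ℕ)/2) ∅ := ilv_get_subset R k hxk
    have hij2 : (i : ℕ)/2 ≤ (j : ℕ)/2 := Nat.div_le_div_right hij
    have hjk2 : (j : ℕ)/2 ≤ (k : ℕ)/2 := Nat.div_le_div_right hjk
    rw [ilv_get]
    split_ifs with hpar
    · exact hitvR x _ _ _ hij2 hjk2 hk2 hxi' hxk'
    · -- j odd
      by_cases hjkeq : (j : ℕ) = (k : ℕ)
      · have : x ∈ (ilv R).get j := by
          have : j = k := Fin.ext hjkeq
          rw [this]; exact hxk
        rw [ilv_get, if_neg hpar] at this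
        exact this
      · have hjk' : (j : ℕ) + 1 ≤ (k : ℕ) := by
          have : (j : ℕ) ≤ (k : ℕ) := hjk
          omega
        have ht1 : (j : ℕ)/2 + 1 ≤ (k : ℕ)/2 := by omega
        have ht1' : (j : ℕ)/2 + 1 < R.length := by omega
        have hmem1 : x ∈ R.getD ((j : ℕ)/2) ∅ := hitvR x _ _ _ hij2 hjk2 hk2 hxi' hxk'
        have hmem2 : x ∈ R.getD ((j : ℕ)/2 + 1) ∅ :=
          hitvR x _ _ _ (by omega) ht1 hk2 hxi' hxk'
        exact inter_subset_mbag R _ (Finset.mem_inter.mpr ⟨hmem1, hmem2⟩)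
  · -- card bounds
    intro S hS
    rw [List.mem_iff_getElem] at hS
    obtain ⟨m, hm, hget⟩ := hS
    have := ilv_get R ⟨m, hm⟩
    simp only [List.get_eq_getElem] at this
    rw [hget] at this
    rw [this]
    split_ifs with h
    · by_cases hm2 : m / 2 < R.length
      · refine hcardR _ ?_
        rw [List.getD_eq_getElem _ _ hm2]
        exact List.getElem_mem hm2
      · rw [List.getD_eq_default _ _ (le_of_not_gt hm2)]
        simp
    · exact (mbag_card R _ hchain w hcardR).trans (by omega)
  · -- each edge has endpoint in a small bag
    intro x y hxy
    obtain ⟨S, hS, hx, hy⟩ := hcov x y hxy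
    obtain ⟨V, hV, hSV⟩ := reduceR_subset L S hS
    by_cases hVcard : V.card ≤ w
    · exact ⟨x, Or.inl rfl, V, mem_ilv_of_mem R V hV, hSV hx, hVcard⟩
    · -- V is a full bag
      obtain ⟨k, hk, hgetV⟩ := List.mem_iff_getElem.mp hV
      have hVk : R.getD k ∅ = V := by rw [List.getD_eq_getElem _ _ hk, hgetV]
      have hne : (R.getD k ∅ \ R.getD (k+1) ∅).Nonempty := by
        rw [Finset.sdiff_nonempty]
        intro hsubVT
        by_cases hk1 : k + 1 < R.length
        · have := List.isChain_iff_getElem.mp hchain k (by omega)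
          rw [List.getD_eq_getElem _ _ hk, List.getD_eq_getElem _ _ hk1] at hsubVT
          exact this.1 hsubVT
        · rw [List.getD_eq_default _ _ (le_of_not_gt hk1)] at hsubVT
          have : R.getD k ∅ = ∅ := Finset.subset_empty.mp hsubVT
          rw [hVk] at this
          rw [this] at hVcard
          simp at hVcard
      have hmdef : mbag R k = (R.getD k ∅).erase hne.choose := by
        rw [mbag, dif_pos hne]
      have hcardm : (mbag R k).card ≤ w := mbag_card R k hchain w hcardR
      have hxy' : x ≠ y := hxy.ne
      by_cases hcx : hne.choose = x
      · refine ⟨y, Or.inr rfl, mbag R k, mbag_mem_ilv R k hk, ?_, hcardm⟩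
        rw [hmdef]
        exact Finset.mem_erase.mpr ⟨by rw [hcx]; exact hxy'.symm, hVk ▸ hSV hy⟩
      · refine ⟨x, Or.inl rfl, mbag R k, mbag_mem_ilv R k hk, ?_, hcardm⟩
        rw [hmdef]
        exact Finset.mem_erase.mpr ⟨fun h => hcx h.symm, hVk ▸ hSV hx⟩
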